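/- Let p ≥ q ≥ 1 be integers and let K_{p,q} = (V, E) be the complete bipartite graph with parts P and Q, where |P| = p, |Q| = q, P ∩ Q = ∅, V = P ∪ Q, and hyperedges all two-element sets {u, v} with u ∈ P and v ∈ Q. Then the minimum weight of an edge-discriminator on K_{p,q} equals (2q + p(p − 1 + q(q − 1)))/2. -/

import Mathlib

/-- `lam` is an edge-discriminator on the hypergraph with hyperedge family `E`
(vertices are natural numbers). -/
def IsEdgeDiscriminator (E : Finset (Finset ℕ)) (lam : ℕ → ℕ) : Prop :=
  (∀ e ∈ E, 0 < ∑ v ∈ e, lam v) ∧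
  (∀ e ∈ E, ∀ f ∈ E, e ≠ f → ∑ v ∈ e, lam v ≠ ∑ v ∈ f, lam v)

/-- The edge set of the complete bipartite graph with parts `P` and `Q`. -/
def bipartiteEdges (P Q : Finset ℕ) : Finset (Finset ℕ) :=
  P.biUnion (fun u => Q.image (fun v => ({u, v} : Finset ℕ)))

lemma sum_distinct_ge (S : Finset ℕ) : ∑ i ∈ Finset.range S.card, i ≤ ∑ s ∈ S, s := by
  induction S using Finset.induction_on_max with
  | empty => simp
  | insert a S ha ih =>
    have hS : S ⊆ Finset.range a := fun x hx => Finset.mem_range.mpr (ha x hx)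
    have hcard : S.card ≤ a := by simpa using Finset.card_le_card hS
    have hna : a ∉ S := fun h => lt_irrefl a (ha a h)
    rw [Finset.sum_insert hna, Finset.card_insert_of_notMem hna,
      Finset.sum_range_succ]
    omega

lemma sum_distinct_pos_ge (S : Finset ℕ) (h0 : 0 ∉ S) :
    S.card * (S.card + 1) ≤ 2 * ∑ s ∈ S, s := by
  classical
  set T := S.image (· - 1) with hT
  have hinj : Set.InjOn (· - 1) S := by
    intro x hx y hy hxy
    have hx1 : 1 ≤ x := Nat.one_le_iff_ne_zero.mpr (fun h => h0 (h ▸ hx))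
    have hy1 : 1 ≤ y := Nat.one_le_iff_ne_zero.mpr (fun h => h0 (h ▸ hy))
    simp only at hxy
    omega
  have hcard : T.card = S.card := Finset.card_image_of_injOn hinj
  have hsum : ∑ t ∈ T, t = ∑ s ∈ S, (s - 1) :=
    Finset.sum_image (fun x hx y hy => hinj hx hy)
  have h1 : ∑ s ∈ S, s = ∑ s ∈ S, (s - 1) + S.card := by
    rw [Finset.card_eq_sum_ones, ← Finset.sum_add_distrib]
    apply Finset.sum_congr rfl
    intro x hx
    have : 1 ≤ x := Nat.one_le_iff_ne_zero.mpr (fun h => h0 (h ▸ hx))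
    omega
  have h2 := sum_distinct_ge T
  have h3 : (∑ i ∈ Finset.range S.card, i) * 2 = S.card * (S.card - 1) :=
    Finset.sum_range_id_mul_two _
  rw [hcard] at h2
  have h4 : S.card * (S.card + 1) = S.card * (S.card - 1) + 2 * S.card := by
    rcases S.card with _ | m
    · simp
    · simp only [Nat.succ_sub_one]; ring
  omega

lemma mem_bipartiteEdges {P Q : Finset ℕ} {e : Finset ℕ} :
    e ∈ bipartiteEdges P Q ↔ ∃ u ∈ P, ∃ v ∈ Q, e = {u, v} := by
  simp [bipartiteEdges, eq_comm]

lemma pair_eq_pair {P Q : Finset ℕ} (hdisj : Disjoint P Q)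
    {u u' v v' : ℕ} (hu : u ∈ P) (hu' : u' ∈ P) (hv : v ∈ Q) (hv' : v' ∈ Q)
    (h : ({u, v} : Finset ℕ) = {u', v'}) : u = u' ∧ v = v' := by
  have h1 : u' ∈ ({u, v} : Finset ℕ) := by rw [h]; simp
  have h2 : v' ∈ ({u, v} : Finset ℕ) := by rw [h]; simp
  simp only [Finset.mem_insert, Finset.mem_singleton] at h1 h2
  have hd := Finset.disjoint_left.mp hdisj
  rcases h1 with h1 | h1
  · rcases h2 with h2 | h2
    · exact absurd hv' (h2 ▸ hd hu)
    · exact ⟨h1.symm, h2.symm⟩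
  · exact absurd hv (h1 ▸ hd hu')

lemma pairwise_disj {P Q : Finset ℕ} (hdisj : Disjoint P Q) :
    (↑P : Set ℕ).PairwiseDisjoint (fun u => Q.image (fun v => ({u, v} : Finset ℕ))) := by
  intro u hu u' hu' hne
  simp only [Function.onFun]
  rw [Finset.disjoint_left]
  intro e he he'
  simp only [Finset.mem_image] at he he'
  obtain ⟨v, hv, rfl⟩ := he
  obtain ⟨v', hv', hee⟩ := he'
  exact hne (pair_eq_pair hdisj hu' hu hv' hv hee).1.symm

lemma injOn_pair {P Q : Finset ℕ} (hdisj : Disjoint P Q) {u : ℕ} (hu : u ∈ P) :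
    ∀ x ∈ Q, ∀ y ∈ Q, ({u, x} : Finset ℕ) = {u, y} → x = y := by
  intro x hx y hy h
  exact (pair_eq_pair hdisj hu hu hx hy h).2

lemma card_bipartiteEdges {P Q : Finset ℕ} (hdisj : Disjoint P Q) :
    (bipartiteEdges P Q).card = P.card * Q.card := by
  rw [bipartiteEdges, Finset.card_biUnion (fun u hu u' hu' hne => pairwise_disj hdisj hu hu' hne)]
  rw [Finset.sum_congr rfl (fun u hu => Finset.card_image_of_injOn (fun x hx y hy => injOn_pair hdisj hu x hx y hy))]
  simp [mul_comm]

lemma sum_bipartiteEdges {P Q : Finset ℕ} (hdisj : Disjoint P Q) (lam : ℕ → ℕ) :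
    ∑ e ∈ bipartiteEdges P Q, ∑ v ∈ e, lam v
      = Q.card * ∑ u ∈ P, lam u + P.card * ∑ v ∈ Q, lam v := by
  rw [bipartiteEdges, Finset.sum_biUnion (pairwise_disj hdisj)]
  have hd := Finset.disjoint_left.mp hdisj
  have step : ∀ u ∈ P, ∑ e ∈ Q.image (fun v => ({u, v} : Finset ℕ)), ∑ x ∈ e, lam x
      = Q.card * lam u + ∑ v ∈ Q, lam v := by
    intro u hu
    rw [Finset.sum_image (fun x hx y hy => injOn_pair hdisj hu x hx y hy)]
    have : ∀ v ∈ Q, ∑ x ∈ ({u, v} : Finset ℕ), lam x = lam u + lam v := by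
      intro v hv
      exact Finset.sum_pair (fun h => hd hu (h ▸ hv))
    rw [Finset.sum_congr rfl this, Finset.sum_add_distrib, Finset.sum_const, smul_eq_mul]
  rw [Finset.sum_congr rfl step, Finset.sum_add_distrib, Finset.sum_const, smul_eq_mul,
    Finset.mul_sum]
  rw [Finset.mul_sum]

theorem complete_bipartite_optimum (p q : ℕ) (hq : 1 ≤ q) (hpq : q ≤ p)
    (P Q : Finset ℕ) (hP : P.card = p) (hQ : Q.card = q)
    (hdisj : Disjoint P Q) :
    IsLeast {w : ℕ | ∃ lam : ℕ → ℕ,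
        IsEdgeDiscriminator (bipartiteEdges P Q) lam ∧
        ∑ v ∈ P ∪ Q, lam v = w}
      ((2 * q + p * (p - 1 + q * (q - 1))) / 2) := by
  classical
  obtain ⟨q1, rfl⟩ : ∃ q1, q = q1 + 1 := ⟨q - 1, by omega⟩
  obtain ⟨p1, rfl⟩ : ∃ p1, p = p1 + 1 := ⟨p - 1, by omega⟩
  set p := p1 + 1 with hp'
  set q := q1 + 1 with hq'
  have hp0 : 0 < p := by omega
  have hsub : p - 1 = p1 ∧ q - 1 = q1 := ⟨by omega, by omega⟩
  set t := (2 * q + p * (p - 1 + q * (q - 1))) / 2 with ht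
  have heven : Even (2 * q + p * (p - 1 + q * (q - 1))) := by
    have e1 : Even (p * (p - 1)) := by
      rw [hsub.1, mul_comm]; exact Nat.even_mul_succ_self p1
    have e2 : Even (p * (q * (q - 1))) := by
      refine Even.mul_left ?_ p
      rw [hsub.2, mul_comm]; exact Nat.even_mul_succ_self q1
    have e3 : Even (2 * q) := ⟨q, by ring⟩
    have : 2 * q + p * (p - 1 + q * (q - 1)) = 2 * q + p * (p - 1) + p * (q * (q - 1)) := by
      ring
    rw [this]
    exact (e3.add e1).add e2
  have h2t : 2 * t = 2 * q + p * (p - 1 + q * (q - 1)) := by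
    rw [ht]
    exact Nat.two_mul_div_two_of_even heven
  have hd := Finset.disjoint_left.mp hdisj
  constructor
  · -- membership: construction of an optimal discriminator
    set eP : ↥P ≃ Fin P.card := P.equivFin with heP
    set eQ : ↥Q ≃ Fin Q.card := Q.equivFin with heQ
    set lam : ℕ → ℕ := fun x =>
      if h : x ∈ P then (eP ⟨x, h⟩ : ℕ)
      else if h : x ∈ Q then 1 + p * (eQ ⟨x, h⟩ : ℕ) else 0 with hlamdef
    have hlamP : ∀ (u : ℕ) (hu : u ∈ P), lam u = (eP ⟨u, hu⟩ : ℕ) := by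
      intro u hu; simp only [hlamdef, dif_pos hu]
    have hlamQ : ∀ (v : ℕ) (hv : v ∈ Q), lam v = 1 + p * (eQ ⟨v, hv⟩ : ℕ) := by
      intro v hv
      have : v ∉ P := fun h => hd h hv
      simp only [hlamdef, dif_neg this, dif_pos hv]
    have hpair : ∀ (u : ℕ) (hu : u ∈ P) (v : ℕ) (hv : v ∈ Q),
        ∑ x ∈ ({u, v} : Finset ℕ), lam x = (eP ⟨u, hu⟩ : ℕ) + (1 + p * (eQ ⟨v, hv⟩ : ℕ)) := by
      intro u hu v hv
      rw [Finset.sum_pair (show u ≠ v from fun h => hd hu (by rw [h]; exact hv)), hlamP u hu, hlamQ v hv]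
    refine ⟨lam, ⟨?_, ?_⟩, ?_⟩
    · intro e he
      obtain ⟨u, hu, v, hv, rfl⟩ := mem_bipartiteEdges.mp he
      rw [hpair u hu v hv]
      omega
    · intro e he f hf hne
      obtain ⟨u, hu, v, hv, rfl⟩ := mem_bipartiteEdges.mp he
      obtain ⟨u', hu', v', hv', rfl⟩ := mem_bipartiteEdges.mp hf
      rw [hpair u hu v hv, hpair u' hu' v' hv']
      intro heq
      apply hne
      set i := (eP ⟨u, hu⟩ : ℕ) with hi
      set i' := (eP ⟨u', hu'⟩ : ℕ) with hi'
      set j := (eQ ⟨v, hv⟩ : ℕ) with hj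
      set j' := (eQ ⟨v', hv'⟩ : ℕ) with hj'
      have hilt : i < p := by rw [hi]; exact hP ▸ (eP ⟨u, hu⟩).isLt
      have hilt' : i' < p := by rw [hi']; exact hP ▸ (eP ⟨u', hu'⟩).isLt
      have heq' : i + p * j = i' + p * j' := by
        set a := p * j with ha; set b := p * j' with hb; omega
      have m1 : (i + p * j) % p = i := by
        rw [Nat.add_mul_mod_self_left, Nat.mod_eq_of_lt hilt]
      have m2 : (i' + p * j') % p = i' := by
        rw [Nat.add_mul_mod_self_left, Nat.mod_eq_of_lt hilt']
      have hii : i = i' := by rw [← m1, heq', m2]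
      have hjj : j = j' := by
        have hpj : p * j = p * j' := by omega
        exact Nat.eq_of_mul_eq_mul_left hp0 hpj
      have huu : u = u' := by
        have : (⟨u, hu⟩ : ↥P) = ⟨u', hu'⟩ := eP.injective (Fin.ext hii)
        exact congrArg Subtype.val this
      have hvv : v = v' := by
        have : (⟨v, hv⟩ : ↥Q) = ⟨v', hv'⟩ := eQ.injective (Fin.ext hjj)
        exact congrArg Subtype.val this
      rw [huu, hvv]
    · -- total weight equals t
      rw [Finset.sum_union hdisj]
      have hsumP : ∑ x ∈ P, lam x = ∑ i ∈ Finset.range p, i := by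
        rw [← Finset.sum_attach P lam]
        have : ∀ x ∈ P.attach, lam ↑x = ((eP x : Fin P.card) : ℕ) := by
          intro x _
          rw [hlamP ↑x x.2]
        rw [Finset.sum_congr rfl this]
        have h1 : ∑ x ∈ P.attach, ((eP x : Fin P.card) : ℕ)
            = ∑ i : Fin P.card, (i : ℕ) := by
          rw [← Equiv.sum_comp eP (fun i : Fin P.card => (i : ℕ))]
          rfl
        rw [h1, Fin.sum_univ_eq_sum_range (fun i => i), hP]
      have hsumQ : ∑ x ∈ Q, lam x = ∑ j ∈ Finset.range q, (1 + p * j) := by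
        rw [← Finset.sum_attach Q lam]
        have : ∀ x ∈ Q.attach, lam ↑x = 1 + p * ((eQ x : Fin Q.card) : ℕ) := by
          intro x _
          rw [hlamQ ↑x x.2]
        rw [Finset.sum_congr rfl this]
        have h1 : ∑ x ∈ Q.attach, (1 + p * ((eQ x : Fin Q.card) : ℕ))
            = ∑ i : Fin Q.card, (1 + p * (i : ℕ)) := by
          rw [← Equiv.sum_comp eQ (fun i : Fin Q.card => 1 + p * (i : ℕ))]
          rfl
        rw [h1, Fin.sum_univ_eq_sum_range (fun i => 1 + p * i), hQ]
      rw [hsumP, hsumQ]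
      have hGp : (∑ i ∈ Finset.range p, i) * 2 = p * (p - 1) :=
        Finset.sum_range_id_mul_two p
      have hGq : (∑ i ∈ Finset.range q, i) * 2 = q * (q - 1) :=
        Finset.sum_range_id_mul_two q
      have hQsum : ∑ j ∈ Finset.range q, (1 + p * j)
          = q + p * ∑ j ∈ Finset.range q, j := by
        rw [Finset.sum_add_distrib, Finset.sum_const, ← Finset.mul_sum]
        simp
      rw [hQsum]
      -- show equality after multiplying by 2
      have key : 2 * ((∑ i ∈ Finset.range p, i) + (q + p * ∑ j ∈ Finset.range q, j)) = 2 * t := by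
        rw [h2t]
        have : 2 * ((∑ i ∈ Finset.range p, i) + (q + p * ∑ j ∈ Finset.range q, j))
            = (∑ i ∈ Finset.range p, i) * 2 + 2 * q + p * ((∑ j ∈ Finset.range q, j) * 2) := by
          ring
        rw [this, hGp, hGq, hsub.1, hsub.2, hp', hq']
        ring
      omega
  · -- lower bound
    rintro w ⟨lam, ⟨hpos, hdiff⟩, hw⟩
    set A := ∑ u ∈ P, lam u with hA
    set B := ∑ v ∈ Q, lam v with hB
    have hwAB : w = A + B := by rw [← hw, Finset.sum_union hdisj]
    obtain ⟨v0, hv0⟩ := Finset.card_pos.mp (show 0 < Q.card by omega)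
    have hinjP : Set.InjOn lam P := by
      intro u hu u' hu' hlam
      by_contra hne
      have he : ({u, v0} : Finset ℕ) ∈ bipartiteEdges P Q :=
        mem_bipartiteEdges.mpr ⟨u, hu, v0, hv0, rfl⟩
      have hf : ({u', v0} : Finset ℕ) ∈ bipartiteEdges P Q :=
        mem_bipartiteEdges.mpr ⟨u', hu', v0, hv0, rfl⟩
      have hne' : ({u, v0} : Finset ℕ) ≠ {u', v0} :=
        fun h => hne (pair_eq_pair hdisj hu hu' hv0 hv0 h).1
      apply hdiff _ he _ hf hne'
      rw [Finset.sum_pair (show u ≠ v0 from fun h => hd hu (by rw [h]; exact hv0)),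
        Finset.sum_pair (show u' ≠ v0 from fun h => hd hu' (by rw [h]; exact hv0)), hlam]
    have hAcard : (P.image lam).card = p := by
      rw [Finset.card_image_of_injOn hinjP, hP]
    have hAsum : ∑ s ∈ P.image lam, s = A :=
      Finset.sum_image (fun x hx y hy => hinjP hx hy)
    have hA1 := sum_distinct_ge (P.image lam)
    have hA3 : (∑ i ∈ Finset.range p, i) * 2 = p * (p - 1) :=
      Finset.sum_range_id_mul_two p
    rw [hAcard, hAsum] at hA1
    have hA2 : p * (p - 1) ≤ 2 * A := by
      calc p * (p - 1) = (∑ i ∈ Finset.range p, i) * 2 := hA3.symm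
        _ ≤ A * 2 := Nat.mul_le_mul_right 2 hA1
        _ = 2 * A := mul_comm _ _
    -- edge sums
    set S' := (bipartiteEdges P Q).image (fun e => ∑ v ∈ e, lam v) with hS'
    have hinjE : Set.InjOn (fun e => ∑ v ∈ e, lam v) (bipartiteEdges P Q) := by
      intro e he f hf hef
      by_contra hne
      exact hdiff e he f hf hne hef
    have hScard : S'.card = p * q := by
      rw [hS', Finset.card_image_of_injOn hinjE, card_bipartiteEdges hdisj, hP, hQ]
    have h0S : 0 ∉ S' := by
      intro h0
      rw [hS'] at h0
      obtain ⟨e, he, hesum⟩ := Finset.mem_image.mp h0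
      exact absurd (hpos e he) (by omega)
    have hSsum : ∑ s ∈ S', s = q * A + p * B := by
      rw [hS', Finset.sum_image (fun x hx y hy => hinjE hx hy),
        sum_bipartiteEdges hdisj lam, hP, hQ]
    have hS2 : (p * q) * (p * q + 1) ≤ 2 * (q * A + p * B) := by
      have := sum_distinct_pos_ge S' h0S
      rw [hScard, hSsum] at this
      exact this
    -- combine
    obtain ⟨d, hdd⟩ := Nat.exists_eq_add_of_le (show q1 ≤ p1 by omega)
    have key : p * (2 * t) ≤ p * (2 * (A + B)) := by
      calc p * (2 * t) = d * (p * (p - 1)) + (p * q) * (p * q + 1) := by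
            rw [h2t, hsub.1, hsub.2, hp', hq', hdd]
            ring
        _ ≤ d * (2 * A) + 2 * (q * A + p * B) :=
            Nat.add_le_add (Nat.mul_le_mul_left d hA2) hS2
        _ = p * (2 * (A + B)) := by
            rw [hp', hq', hdd]; ring
    have := Nat.le_of_mul_le_mul_left key hp0
    omega
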